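/- Let k ≥ 1 and let Λ be a row-finite k-graph without sources. Then Iso(G_Λ)° is closed in G_Λ if and only if Λ^∞_{p,q} = ∅ for all p ≠ q in ℕ^k. -/

import Mathlib

/-- A `k`-graph: a small category `Λ` (morphisms in `Hom a b` have range `a` and
source `b`, composed path-wise) with a degree functor `d : Λ → ℕ^k` satisfying the
factorization property. -/
structure KGraph (k : ℕ) where
  Obj : Type
  Hom : Obj → Obj → Type
  id : ∀ a : Obj, Hom a a
  comp : ∀ {a b c : Obj}, Hom a b → Hom b c → Hom a c
  id_comp : ∀ {a b : Obj} (f : Hom a b), comp (id a) f = f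
  comp_id : ∀ {a b : Obj} (f : Hom a b), comp f (id b) = f
  assoc : ∀ {a b c e : Obj} (f : Hom a b) (g : Hom b c) (h : Hom c e),
    comp (comp f g) h = comp f (comp g h)
  d : ∀ {a b : Obj}, Hom a b → (Fin k → ℕ)
  d_id : ∀ a : Obj, d (id a) = 0
  d_comp : ∀ {a b c : Obj} (f : Hom a b) (g : Hom b c), d (comp f g) = d f + d g
  factor : ∀ {a b : Obj} (f : Hom a b) (m n : Fin k → ℕ), d f = m + n →
    ∃! t : Σ c : Obj, Hom a c × Hom c b,
      d t.2.1 = m ∧ d t.2.2 = n ∧ comp t.2.1 t.2.2 = f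

namespace KGraph

variable {k : ℕ} (Λ : KGraph k)

/-- `Λ` is row-finite: `vΛ^n` is finite for every vertex `v` and degree `n`. -/
def RowFinite : Prop :=
  ∀ (v : Λ.Obj) (n : Fin k → ℕ), Finite {t : Σ w : Λ.Obj, Λ.Hom v w // Λ.d t.2 = n}

/-- `Λ` has no sources: `vΛ^n ≠ ∅` for every vertex `v` and degree `n`. -/
def NoSources : Prop :=
  ∀ (v : Λ.Obj) (n : Fin k → ℕ), ∃ (w : Λ.Obj) (μ : Λ.Hom v w), Λ.d μ = n

/-- An infinite path of `Λ`: a degree-preserving functor from `Ω_k` to `Λ`. -/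
structure InfPath where
  vert : (Fin k → ℕ) → Λ.Obj
  seg : ∀ p q : Fin k → ℕ, p ≤ q → Λ.Hom (vert p) (vert q)
  seg_id : ∀ p : Fin k → ℕ, seg p p le_rfl = Λ.id (vert p)
  seg_comp : ∀ (p q r : Fin k → ℕ) (h1 : p ≤ q) (h2 : q ≤ r),
    Λ.comp (seg p q h1) (seg q r h2) = seg p r (le_trans h1 h2)
  seg_deg : ∀ (p q : Fin k → ℕ) (h : p ≤ q), Λ.d (seg p q h) = q - p

/-- The shift `σ^p` on infinite paths. -/
def shift (p : Fin k → ℕ) (x : Λ.InfPath) : Λ.InfPath where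
  vert q := x.vert (p + q)
  seg q q' h := x.seg (p + q) (p + q') (add_le_add_right h p)
  seg_id q := x.seg_id (p + q)
  seg_comp q q' q'' h1 h2 := x.seg_comp (p + q) (p + q') (p + q'') _ _
  seg_deg q q' h := by
    rw [x.seg_deg]
    funext i
    simp only [Pi.sub_apply, Pi.add_apply]
    omega

/-- `y = μ x` : the infinite path `y` is the concatenation of the finite path `μ`
with the infinite path `x`. -/
def IsPrepend {a b : Λ.Obj} (μ : Λ.Hom a b) (x y : Λ.InfPath) : Prop :=
  x.vert 0 = b ∧ y.vert 0 = a ∧ Λ.shift (Λ.d μ) y = x ∧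
    HEq (y.seg 0 (Λ.d μ) (fun _ => Nat.zero_le _)) μ

/-- `(μ, ν)` is a cycline pair: `s(μ) = s(ν)` and `μ x = ν x` for every infinite
path `x` with `x(0) = s(μ)`. -/
def Cycline {a v b w : Λ.Obj} (μ : Λ.Hom a v) (ν : Λ.Hom b w) : Prop :=
  v = w ∧ ∀ x y z : Λ.InfPath, Λ.IsPrepend μ x y → Λ.IsPrepend ν x z → y = z

/-- The cylinder set `Z(μ) ⊆ Λ^∞`. -/
def cylZ {a b : Λ.Obj} (μ : Λ.Hom a b) : Set Λ.InfPath :=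
  {y | HEq (y.seg 0 (Λ.d μ) (fun _ => Nat.zero_le _)) μ}

/-- The topology on `Λ^∞` generated by the cylinder sets `Z(μ)`. -/
instance : TopologicalSpace Λ.InfPath :=
  TopologicalSpace.generateFrom
    {S | ∃ (a b : Λ.Obj) (μ : Λ.Hom a b), S = Λ.cylZ μ}

/-- The path groupoid `G_Λ` as a set. -/
def PathGroupoid : Type :=
  {g : Λ.InfPath × (Fin k → ℤ) × Λ.InfPath //
    ∃ p q : Fin k → ℕ, (∀ i, g.2.1 i = (p i : ℤ) - (q i : ℤ)) ∧
      Λ.shift p g.1 = Λ.shift q g.2.2}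

/-- The basic set `Z(μ, ν) ⊆ G_Λ` for `μ, ν` with common source. -/
def ZZ {a b v : Λ.Obj} (μ : Λ.Hom a v) (ν : Λ.Hom b v) : Set Λ.PathGroupoid :=
  {g | ∃ x : Λ.InfPath, Λ.IsPrepend μ x g.1.1 ∧ Λ.IsPrepend ν x g.1.2.2 ∧
    ∀ i, g.1.2.1 i = (Λ.d μ i : ℤ) - (Λ.d ν i : ℤ)}

/-- The topology on `G_Λ` generated by the sets `Z(μ, ν)`. -/
instance : TopologicalSpace Λ.PathGroupoid :=
  TopologicalSpace.generateFrom
    {S | ∃ (a b v : Λ.Obj) (μ : Λ.Hom a v) (ν : Λ.Hom b v), S = Λ.ZZ μ ν}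

/-- The isotropy group bundle `Iso(G_Λ)`. -/
def isoSet : Set Λ.PathGroupoid := {g | g.1.1 = g.1.2.2}

/-- The set `Λ^∞_{p,q}` of Notation 4.4. -/
def LambdaPQ (p q : Fin k → ℕ) : Set Λ.InfPath :=
  {x | Λ.shift p x = Λ.shift q x ∧
    ∀ m : Fin k → ℕ,
      ¬ Λ.Cycline (x.seg 0 (p + m) (fun _ => Nat.zero_le _))
          (x.seg 0 (q + m) (fun _ => Nat.zero_le _)) ∧
      ∃ (c : Λ.Obj) (μ : Λ.Hom (x.vert (p + m)) c) (ν : Λ.Hom (x.vert (q + m)) c),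
        HEq μ ν ∧
        Λ.Cycline (Λ.comp (x.seg 0 (p + m) (fun _ => Nat.zero_le _)) μ)
          (Λ.comp (x.seg 0 (q + m) (fun _ => Nat.zero_le _)) ν)}

end KGraph

namespace KGraph

variable {k : ℕ} {Λ : KGraph k}

/-- Heterogeneous equality of morphisms, together with equality of endpoints. -/
def MEq {a b a' b' : Λ.Obj} (f : Λ.Hom a b) (g : Λ.Hom a' b') : Prop :=
  a = a' ∧ b = b' ∧ HEq f g

namespace MEq

theorem refl {a b : Λ.Obj} (f : Λ.Hom a b) : MEq f f := ⟨rfl, rfl, HEq.rfl⟩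

theorem symm {a b a' b' : Λ.Obj} {f : Λ.Hom a b} {g : Λ.Hom a' b'}
    (h : MEq f g) : MEq g f := ⟨h.1.symm, h.2.1.symm, h.2.2.symm⟩

theorem trans {a b a' b' a'' b'' : Λ.Obj} {f : Λ.Hom a b} {g : Λ.Hom a' b'}
    {h : Λ.Hom a'' b''} (h1 : MEq f g) (h2 : MEq g h) : MEq f h :=
  ⟨h1.1.trans h2.1, h1.2.1.trans h2.2.1, h1.2.2.trans h2.2.2⟩

theorem ofEq {a b : Λ.Obj} {f g : Λ.Hom a b} (h : f = g) : MEq f g :=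
  ⟨rfl, rfl, heq_of_eq h⟩

theorem eq {a b : Λ.Obj} {f g : Λ.Hom a b} (h : MEq f g) : f = g :=
  eq_of_heq h.2.2

theorem src {a b a' b' : Λ.Obj} {f : Λ.Hom a b} {g : Λ.Hom a' b'}
    (h : MEq f g) : a = a' := h.1

theorem tgt {a b a' b' : Λ.Obj} {f : Λ.Hom a b} {g : Λ.Hom a' b'}
    (h : MEq f g) : b = b' := h.2.1

theorem d_eq {a b a' b' : Λ.Obj} {f : Λ.Hom a b} {g : Λ.Hom a' b'}
    (h : MEq f g) : Λ.d f = Λ.d g := by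
  obtain ⟨h1, h2, h3⟩ := h
  subst h1; subst h2
  rw [eq_of_heq h3]

theorem comp {a b c a' b' c' : Λ.Obj} {f : Λ.Hom a b} {g : Λ.Hom b c}
    {f' : Λ.Hom a' b'} {g' : Λ.Hom b' c'} (h1 : MEq f f') (h2 : MEq g g') :
    MEq (Λ.comp f g) (Λ.comp f' g') := by
  obtain ⟨e1, e2, e3⟩ := h1
  obtain ⟨e4, e5, e6⟩ := h2
  subst e1; subst e2; subst e5
  rw [eq_of_heq e3, eq_of_heq e6]
  exact MEq.refl _

end MEq

/-- A morphism cast along equalities of its endpoints. -/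
def castHom {a b a' b' : Λ.Obj} (ha : a = a') (hb : b = b') (f : Λ.Hom a b) :
    Λ.Hom a' b' := ha ▸ hb ▸ f

theorem castHom_MEq {a b a' b' : Λ.Obj} (ha : a = a') (hb : b = b')
    (f : Λ.Hom a b) : MEq (castHom ha hb f) f := by
  subst ha; subst hb; exact MEq.refl f

/-- Uniqueness of factorizations. -/
theorem factor_unique {a b c c' : Λ.Obj} {f1 : Λ.Hom a c} {f2 : Λ.Hom c b}
    {g1 : Λ.Hom a c'} {g2 : Λ.Hom c' b} (hd : Λ.d f1 = Λ.d g1)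
    (h : Λ.comp f1 f2 = Λ.comp g1 g2) :
    MEq f1 g1 ∧ MEq f2 g2 := by
  have hd2 : Λ.d g2 = Λ.d f2 := by
    have := congrArg Λ.d h
    rw [Λ.d_comp, Λ.d_comp, hd] at this
    exact (add_left_cancel this).symm
  obtain ⟨t, _, hu⟩ := Λ.factor (Λ.comp f1 f2) (Λ.d f1) (Λ.d f2) (Λ.d_comp f1 f2)
  have h1 : (⟨c, f1, f2⟩ : Σ c : Λ.Obj, Λ.Hom a c × Λ.Hom c b) = t :=
    hu ⟨c, f1, f2⟩ ⟨rfl, rfl, rfl⟩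
  have h2 : (⟨c', g1, g2⟩ : Σ c : Λ.Obj, Λ.Hom a c × Λ.Hom c b) = t :=
    hu ⟨c', g1, g2⟩ ⟨hd.symm, hd2, h.symm⟩
  have h3 := h1.trans h2.symm
  obtain ⟨hc, hp⟩ := Sigma.mk.inj_iff.mp h3
  subst hc
  have hp' : (f1, f2) = (g1, g2) := eq_of_heq hp
  obtain ⟨hq, hr⟩ := Prod.ext_iff.mp hp'
  exact ⟨MEq.ofEq hq, MEq.ofEq hr⟩

/-- `MEq` version of uniqueness of factorizations. -/
theorem factor_unique' {a b c a' b' c' : Λ.Obj} {f1 : Λ.Hom a c} {f2 : Λ.Hom c b}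
    {g1 : Λ.Hom a' c'} {g2 : Λ.Hom c' b'} (hd : Λ.d f1 = Λ.d g1)
    (h : MEq (Λ.comp f1 f2) (Λ.comp g1 g2)) :
    MEq f1 g1 ∧ MEq f2 g2 := by
  obtain ⟨h1, h2, h3⟩ := h
  subst h1; subst h2
  exact factor_unique hd (eq_of_heq h3)

/-- Degree-zero morphisms are identities. -/
theorem MEq_id_of_d_eq_zero {a b : Λ.Obj} {f : Λ.Hom a b} (h : Λ.d f = 0) :
    MEq f (Λ.id a) := by
  have h1 : Λ.comp f (Λ.id b) = Λ.comp (Λ.id a) f := by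
    rw [Λ.comp_id, Λ.id_comp]
  have hd : Λ.d f = Λ.d (Λ.id a) := by rw [h, Λ.d_id]
  exact (factor_unique hd h1).1

end KGraph
namespace KGraph

variable {k : ℕ} {Λ : KGraph k}

theorem le0 (r : Fin k → ℕ) : (0 : Fin k → ℕ) ≤ r := fun _ => Nat.zero_le _

theorem le_addr (p s : Fin k → ℕ) : p ≤ p + s := fun i => Nat.le_add_right _ _

/-- The degree of an initial segment. -/
theorem seg_d0 (x : Λ.InfPath) (P : Fin k → ℕ) (h : (0:Fin k → ℕ) ≤ P) :
    Λ.d (x.seg 0 P h) = P := by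
  rw [x.seg_deg]; rfl

theorem seg_MEq_of_path_eq {x y : Λ.InfPath} (h : x = y) (p q : Fin k → ℕ)
    (hpq : p ≤ q) : MEq (x.seg p q hpq) (y.seg p q hpq) := by
  subst h; exact MEq.refl _

theorem seg_congr_idx (x : Λ.InfPath) {p q p' q' : Fin k → ℕ} (hp : p = p')
    (hq : q = q') (h : p ≤ q) (h' : p' ≤ q') :
    MEq (x.seg p q h) (x.seg p' q' h') := by
  subst hp; subst hq; exact MEq.refl _

theorem vert_congr_idx (x : Λ.InfPath) {p p' : Fin k → ℕ} (hp : p = p') :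
    x.vert p = x.vert p' := by rw [hp]

/-- Extensionality for infinite paths, from their initial segments. -/
theorem InfPath.ext' {x y : Λ.InfPath}
    (h : ∀ r : Fin k → ℕ, MEq (x.seg 0 r (le0 r)) (y.seg 0 r (le0 r))) :
    x = y := by
  have hv : x.vert = y.vert := by
    funext r
    exact (h r).2.1
  obtain ⟨xv, xs, xsi, xsc, xsd⟩ := x
  obtain ⟨yv, ys, ysi, ysc, ysd⟩ := y
  dsimp at hv h
  subst hv
  have hs : xs = ys := by
    funext p q hpq
    have h0q : MEq (xs 0 q (le0 q)) (ys 0 q (le0 q)) := h q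
    have hc1 : Λ.comp (xs 0 p (le0 p)) (xs p q hpq) = xs 0 q (le0 q) := xsc 0 p q _ _
    have hc2 : Λ.comp (ys 0 p (le0 p)) (ys p q hpq) = ys 0 q (le0 q) := ysc 0 p q _ _
    have hd : Λ.d (xs 0 p (le0 p)) = Λ.d (ys 0 p (le0 p)) := by
      rw [xsd, ysd]
    have := factor_unique (Λ := Λ) hd (by rw [hc1, hc2]; exact h0q.eq)
    exact this.2.eq
  subst hs
  rfl

/-- Shift of a shift. -/
theorem shift_shift (p q : Fin k → ℕ) (x : Λ.InfPath) :
    Λ.shift q (Λ.shift p x) = Λ.shift (p + q) x := by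
  apply InfPath.ext'
  intro r
  show MEq (x.seg (p + (q + 0)) (p + (q + r)) _) (x.seg ((p + q) + 0) ((p + q) + r) _)
  exact seg_congr_idx x rfl (by rw [add_assoc]) _ _

theorem shift_congr {p p' : Fin k → ℕ} (h : p = p') (x : Λ.InfPath) :
    Λ.shift p x = Λ.shift p' x := by rw [h]

/-- Transfer of prefixes along `MEq` of longer segments. -/
theorem prefix_MEq {x y : Λ.InfPath} {r R : Fin k → ℕ} (hrR : r ≤ R)
    (h : MEq (x.seg 0 R (le0 R)) (y.seg 0 R (le0 R))) :
    MEq (x.seg 0 r (le0 r)) (y.seg 0 r (le0 r)) ∧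
      MEq (x.seg r R hrR) (y.seg r R hrR) := by
  have hd : Λ.d (x.seg 0 r (le0 r)) = Λ.d (y.seg 0 r (le0 r)) := by
    rw [x.seg_deg, y.seg_deg]
  refine factor_unique' hd ?_
  rw [x.seg_comp 0 r R (le0 r) hrR, y.seg_comp 0 r R (le0 r) hrR]
  exact h

/-- Two paths agreeing on an initial segment and on the tail beyond it agree. -/
theorem ext_of_prefix_tail {x y : Λ.InfPath} {N : Fin k → ℕ}
    (h0 : MEq (x.seg 0 N (le0 N)) (y.seg 0 N (le0 N)))
    (ht : Λ.shift N x = Λ.shift N y) : x = y := by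
  apply InfPath.ext'
  intro r
  have hNR : N ≤ r ⊔ N := le_sup_right
  have hrR : r ≤ r ⊔ N := le_sup_left
  have hidx : N + (r ⊔ N - N) = r ⊔ N := by
    funext i
    simp only [Pi.add_apply, Pi.sub_apply, Pi.sup_apply]
    omega
  have htail : MEq (x.seg N (r ⊔ N) hNR) (y.seg N (r ⊔ N) hNR) := by
    have h1 : MEq (x.seg N (N + (r ⊔ N - N)) (le_addr _ _))
        (y.seg N (N + (r ⊔ N - N)) (le_addr _ _)) :=
      seg_MEq_of_path_eq ht 0 (r ⊔ N - N) (le0 _)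
    exact ((seg_congr_idx x rfl hidx _ _).symm.trans h1).trans
      (seg_congr_idx y rfl hidx _ _)
  have hfull : MEq (x.seg 0 (r ⊔ N) (le0 _)) (y.seg 0 (r ⊔ N) (le0 _)) := by
    rw [← x.seg_comp 0 N (r ⊔ N) (le0 N) hNR, ← y.seg_comp 0 N (r ⊔ N) (le0 N) hNR]
    exact h0.comp htail
  exact (prefix_MEq hrR hfull).1

end KGraph
namespace KGraph

variable {k : ℕ} {Λ : KGraph k}

namespace IsPrepend

theorem seg0 {a b : Λ.Obj} {μ : Λ.Hom a b} {x y : Λ.InfPath}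
    (h : Λ.IsPrepend μ x y) :
    MEq (y.seg 0 (Λ.d μ) (le0 _)) μ := by
  obtain ⟨h1, h2, h3, h4⟩ := h
  refine ⟨h2, ?_, h4⟩
  -- y.vert (d μ) = b
  have := congrArg (fun z : Λ.InfPath => z.vert 0) h3
  exact this.trans h1

theorem tail_seg {a b : Λ.Obj} {μ : Λ.Hom a b} {x y : Λ.InfPath}
    (h : Λ.IsPrepend μ x y) (s : Fin k → ℕ) :
    MEq (y.seg (Λ.d μ) (Λ.d μ + s) (le_addr _ _)) (x.seg 0 s (le0 _)) :=
  seg_MEq_of_path_eq h.2.2.1 0 s (le0 _)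

theorem unique {a b : Λ.Obj} {μ : Λ.Hom a b} {x y y' : Λ.InfPath}
    (h : Λ.IsPrepend μ x y) (h' : Λ.IsPrepend μ x y') : y = y' :=
  ext_of_prefix_tail ((h.seg0).trans (h'.seg0).symm) (h.2.2.1.trans h'.2.2.1.symm)

/-- `IsPrepend` respects `MEq` of the prepended morphism. -/
theorem congr {a b a' b' : Λ.Obj} {μ : Λ.Hom a b} {μ' : Λ.Hom a' b'}
    {x y : Λ.InfPath} (hm : MEq μ μ') (h : Λ.IsPrepend μ x y) :
    Λ.IsPrepend μ' x y := by
  obtain ⟨e1, e2, e3⟩ := hm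
  subst e1; subst e2
  rwa [eq_of_heq e3] at h

end IsPrepend

/-- The canonical self-prepending of an initial segment. -/
theorem isPrepend_seg0 (x : Λ.InfPath) (P : Fin k → ℕ) :
    Λ.IsPrepend (x.seg 0 P (le0 _)) (Λ.shift P x) x := by
  refine ⟨rfl, rfl, ?_, ?_⟩
  · exact shift_congr (seg_d0 x P (le0 _)) x
  · exact (seg_congr_idx x rfl (seg_d0 x P (le0 _)) (le0 _) (le0 _)).2.2

/-- Splitting a prepending of a composite. -/
theorem IsPrepend.of_comp {a b c : Λ.Obj} (f : Λ.Hom a c) (g : Λ.Hom c b)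
    {u y : Λ.InfPath} (h : Λ.IsPrepend (Λ.comp f g) u y) :
    Λ.IsPrepend f (Λ.shift (Λ.d f) y) y ∧
      Λ.IsPrepend g u (Λ.shift (Λ.d f) y) := by
  have hfull : MEq (y.seg 0 (Λ.d f + Λ.d g) (le0 _)) (Λ.comp f g) :=
    (seg_congr_idx y rfl (Λ.d_comp f g) _ _).symm.trans h.seg0
  have hdec := factor_unique' (Λ := Λ)
    (by rw [seg_d0] : Λ.d (y.seg 0 (Λ.d f) (le0 _)) = Λ.d f)
    (by rw [y.seg_comp 0 (Λ.d f) (Λ.d f + Λ.d g) (le0 _) (le_addr _ _)]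
        exact hfull)
  obtain ⟨hy1, hy2⟩ := hdec
  constructor
  · exact ⟨hy1.tgt, h.2.1, rfl, hy1.2.2⟩
  · refine ⟨h.1, hy1.tgt, ?_, ?_⟩
    · rw [shift_shift]
      exact (shift_congr (Λ.d_comp f g).symm y).trans h.2.2.1
    · show HEq (y.seg (Λ.d f + 0) (Λ.d f + Λ.d g) _) g
      exact hy2.2.2

/-- Composing prepends. -/
theorem IsPrepend.comp' {a b c : Λ.Obj} {f : Λ.Hom a c} {g : Λ.Hom c b}
    {u w y : Λ.InfPath} (hf : Λ.IsPrepend f w y) (hg : Λ.IsPrepend g u w) :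
    Λ.IsPrepend (Λ.comp f g) u y := by
  refine ⟨hg.1, hf.2.1, ?_, ?_⟩
  · rw [shift_congr (Λ.d_comp f g) y, ← shift_shift]
    rw [hf.2.2.1]
    exact hg.2.2.1
  · have h1 : MEq (y.seg 0 (Λ.d f + Λ.d g) (le0 _)) (Λ.comp f g) := by
      rw [← y.seg_comp 0 (Λ.d f) (Λ.d f + Λ.d g) (le0 _) (le_addr _ _)]
      refine (hf.seg0).comp ?_
      have h2 : MEq (y.seg (Λ.d f) (Λ.d f + Λ.d g) (le_addr _ _))
          (w.seg 0 (Λ.d g) (le0 _)) := hf.tail_seg (Λ.d g)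
      exact h2.trans hg.seg0
    exact ((seg_congr_idx y rfl (Λ.d_comp f g) _ _).trans h1).2.2

end KGraph
namespace KGraph

variable {k : ℕ} {Λ : KGraph k}

/-- A chosen factorization prefix. -/
noncomputable def preFac {a b : Λ.Obj} (f : Λ.Hom a b) (m : Fin k → ℕ)
    (hm : m ≤ Λ.d f) : Σ c : Λ.Obj, Λ.Hom a c × Λ.Hom c b :=
  (Λ.factor f m (Λ.d f - m) (by funext i; have h9 : m i ≤ Λ.d f i := hm i; simp only [Pi.add_apply, Pi.sub_apply]; omega)).exists.choose

theorem preFac_spec {a b : Λ.Obj} (f : Λ.Hom a b) (m : Fin k → ℕ)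
    (hm : m ≤ Λ.d f) :
    Λ.d (preFac f m hm).2.1 = m ∧ Λ.comp (preFac f m hm).2.1 (preFac f m hm).2.2 = f :=
  let h := (Λ.factor f m (Λ.d f - m) (by funext i; have h9 : m i ≤ Λ.d f i := hm i; simp only [Pi.add_apply, Pi.sub_apply]; omega)).exists.choose_spec
  ⟨h.1, h.2.2⟩

theorem preFac_unique {a b c : Λ.Obj} {f : Λ.Hom a b} {m : Fin k → ℕ}
    {hm : m ≤ Λ.d f} {u : Λ.Hom a c} {w : Λ.Hom c b}
    (hc : Λ.comp u w = f) (hd : Λ.d u = m) :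
    MEq u (preFac f m hm).2.1 ∧ MEq w (preFac f m hm).2.2 := by
  have hs := preFac_spec f m hm
  exact factor_unique (by rw [hd, hs.1]) (by rw [hc, hs.2])

/-- Building an infinite path from a coherent chain of finite paths. -/
noncomputable def ofChain (v : Λ.Obj) (G : ∀ _ : Fin k → ℕ, Σ c : Λ.Obj, Λ.Hom v c)
    (hd : ∀ r, Λ.d (G r).2 = r)
    (hcoh : ∀ p q (h : p ≤ q), ∃ g : Λ.Hom (G p).1 (G q).1,
      Λ.comp (G p).2 g = (G q).2) : Λ.InfPath where
  vert r := (G r).1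
  seg p q h := (hcoh p q h).choose
  seg_id p := by
    have h1 := (hcoh p p le_rfl).choose_spec
    have h2 : Λ.comp (G p).2 (Λ.id (G p).1) = (G p).2 := Λ.comp_id _
    exact (factor_unique rfl (h1.trans h2.symm)).2.eq
  seg_comp p q r h1 h2 := by
    have e1 := (hcoh p q h1).choose_spec
    have e2 := (hcoh q r h2).choose_spec
    have e3 := (hcoh p r (le_trans h1 h2)).choose_spec
    have : Λ.comp (G p).2 (Λ.comp (hcoh p q h1).choose (hcoh q r h2).choose)
        = Λ.comp (G p).2 (hcoh p r (le_trans h1 h2)).choose := by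
      rw [← Λ.assoc, e1, e2, e3]
    exact (factor_unique rfl this).2.eq
  seg_deg p q h := by
    have e1 := (hcoh p q h).choose_spec
    have e2 := congrArg Λ.d e1
    rw [Λ.d_comp, hd p, hd q] at e2
    funext i
    have := congrFun e2 i
    simp only [Pi.add_apply, Pi.sub_apply] at *
    omega

theorem ofChain_vert (v : Λ.Obj) (G) (hd) (hcoh) (r : Fin k → ℕ) :
    (ofChain (Λ := Λ) v G hd hcoh).vert r = (G r).1 := rfl

theorem ofChain_seg0 (v : Λ.Obj) (G) (hd) (hcoh) (r : Fin k → ℕ) :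
    MEq ((ofChain (Λ := Λ) v G hd hcoh).seg 0 r (le0 _)) (G r).2 := by
  have hch := (hcoh 0 r (le0 r)).choose_spec
  have h2 : MEq (Λ.comp (G 0).2 (hcoh 0 r (le0 r)).choose)
      (Λ.comp (Λ.id v) (G r).2) := by
    rw [hch, Λ.id_comp]; exact MEq.refl _
  have h3 := factor_unique' (Λ := Λ) (by rw [hd 0, Λ.d_id]) h2
  exact h3.2

/-- Building an infinite path from a system of "long enough" finite paths. -/
theorem exists_ofGlobal (a : Λ.Obj) (X : ∀ _ : Fin k → ℕ, Σ c : Λ.Obj, Λ.Hom a c)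
    (hdX : ∀ r, r ≤ Λ.d (X r).2)
    (hX : ∀ p q, p ≤ q → ∃ w : Λ.Hom (X p).1 (X q).1, (X q).2 = Λ.comp (X p).2 w) :
    ∃ y : Λ.InfPath, y.vert 0 = a ∧
      ∀ r, MEq (y.seg 0 r (le0 _)) (preFac (X r).2 r (hdX r)).2.1 := by
  set G : ∀ _ : Fin k → ℕ, Σ c : Λ.Obj, Λ.Hom a c :=
    fun r => ⟨(preFac (X r).2 r (hdX r)).1, (preFac (X r).2 r (hdX r)).2.1⟩ with hG
  have hd : ∀ r, Λ.d (G r).2 = r := fun r => (preFac_spec (X r).2 r (hdX r)).1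
  have hcoh : ∀ p q (h : p ≤ q), ∃ g : Λ.Hom (G p).1 (G q).1,
      Λ.comp (G p).2 g = (G q).2 := by
    intro p q hpq
    obtain ⟨w, hw⟩ := hX p q hpq
    -- prefix of (G q).2 at p
    have hq : p ≤ Λ.d (G q).2 := by rw [hd q]; exact hpq
    have hsq := preFac_spec (G q).2 p hq
    set D := preFac (G q).2 p hq with hD
    -- (X q).2 = comp (G q).2 B
    have hB := preFac_spec (X q).2 q (hdX q)
    have hA := preFac_spec (X p).2 p (hdX p)
    -- two decompositions of (X q).2 at degree p
    have hdec1 : Λ.comp D.2.1 (Λ.comp D.2.2 (preFac (X q).2 q (hdX q)).2.2)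
        = (X q).2 := by
      rw [← Λ.assoc, hsq.2]
      exact hB.2
    have hdec2 : Λ.comp (G p).2 (Λ.comp (preFac (X p).2 p (hdX p)).2.2 w)
        = (X q).2 := by
      rw [← Λ.assoc]
      show Λ.comp (Λ.comp (preFac (X p).2 p (hdX p)).2.1 _) _ = _
      rw [hA.2, hw]
    have := factor_unique (Λ := Λ) (by rw [hsq.1, hd p]) (hdec1.trans hdec2.symm)
    -- MEq D.2.1 (G p).2
    obtain ⟨⟨e1, e2, e3⟩, _⟩ := this
    refine ⟨castHom e2 rfl D.2.2, ?_⟩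
    have hcast := castHom_MEq (Λ := Λ) e2 rfl D.2.2
    have : MEq (Λ.comp (G p).2 (castHom e2 rfl D.2.2)) (Λ.comp D.2.1 D.2.2) :=
      MEq.comp ⟨rfl, e2.symm, e3.symm⟩ hcast
    rw [hsq.2] at this
    exact this.eq
  refine ⟨ofChain a G hd hcoh, ?_, fun r => ofChain_seg0 a G hd hcoh r⟩
  show (G 0).1 = a
  exact (MEq_id_of_d_eq_zero (hd 0)).tgt

end KGraph
namespace KGraph

variable {k : ℕ} {Λ : KGraph k}

theorem preFac_full {a b : Λ.Obj} {f : Λ.Hom a b} {m : Fin k → ℕ}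
    {hm : m ≤ Λ.d f} (hd : Λ.d f = m) :
    MEq (preFac f m hm).2.1 f :=
  (preFac_unique (Λ.comp_id f) hd).1.symm

/-- Existence of infinite paths (uses no sources). -/
theorem exists_path (hns : Λ.NoSources) (v : Λ.Obj) :
    ∃ x : Λ.InfPath, x.vert 0 = v := by
  have hstep : ∀ w : Λ.Obj, ∃ t : Σ w' : Λ.Obj, Λ.Hom w w',
      Λ.d t.2 = fun _ => 1 := by
    intro w
    obtain ⟨w', μ, hμ⟩ := hns w (fun _ => 1)
    exact ⟨⟨w', μ⟩, hμ⟩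
  choose step hstep using hstep
  let V : ℕ → Λ.Obj := fun n => Nat.rec v (fun _ w => (step w).1) n
  let E : ∀ n : ℕ, {h : Λ.Hom v (V n) // Λ.d h = fun _ => n} := fun n => by
    induction n with
    | zero => exact ⟨Λ.id v, by rw [Λ.d_id]; funext i; rfl⟩
    | succ n ih =>
        exact ⟨Λ.comp ih.1 (step (V n)).2, by
          rw [Λ.d_comp, ih.2, hstep (V n)]; funext i; simp⟩
  have Eext : ∀ m n : ℕ, m ≤ n → ∃ w : Λ.Hom (V m) (V n),
      (E n).1 = Λ.comp (E m).1 w := by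
    intro m n hmn
    induction n with
    | zero =>
        have : m = 0 := Nat.le_zero.mp hmn
        subst this
        exact ⟨Λ.id (V 0), (Λ.comp_id _).symm⟩
    | succ n ih =>
        rcases Nat.lt_or_ge m (n+1) with h | h
        · obtain ⟨w, hw⟩ := ih (Nat.lt_succ_iff.mp h)
          refine ⟨Λ.comp w (step (V n)).2, ?_⟩
          show Λ.comp (E n).1 (step (V n)).2 = _
          rw [hw, Λ.assoc]
        · have : m = n + 1 := Nat.le_antisymm hmn h
          subst this
          exact ⟨Λ.id _, (Λ.comp_id _).symm⟩
  let N : (Fin k → ℕ) → ℕ := fun r => Finset.univ.sup r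
  have hN : ∀ r i, r i ≤ N r := fun r i => Finset.le_sup (Finset.mem_univ i)
  have hNmono : ∀ p q, p ≤ q → N p ≤ N q := by
    intro p q hpq
    exact Finset.sup_mono_fun (fun i _ => hpq i)
  obtain ⟨y, hy0, _⟩ := exists_ofGlobal v (fun r => ⟨V (N r), (E (N r)).1⟩)
    (by intro r i
        have : Λ.d (E (N r)).1 = fun _ => N r := (E (N r)).2
        rw [this]
        exact hN r i)
    (by intro p q hpq
        exact Eext (N p) (N q) (hNmono p q hpq))
  exact ⟨y, hy0⟩

/-- Existence of prepending. -/
theorem exists_prepend {a : Λ.Obj} (x : Λ.InfPath) (μ : Λ.Hom a (x.vert 0)) :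
    ∃ y : Λ.InfPath, Λ.IsPrepend μ x y := by
  set X : ∀ _ : Fin k → ℕ, Σ c : Λ.Obj, Λ.Hom a c := fun r =>
    ⟨x.vert ((r ⊔ Λ.d μ) - Λ.d μ),
      Λ.comp μ (x.seg 0 ((r ⊔ Λ.d μ) - Λ.d μ) (le0 _))⟩ with hXdef
  have hdeg : ∀ r, Λ.d (X r).2 = Λ.d μ + ((r ⊔ Λ.d μ) - Λ.d μ) := by
    intro r
    rw [Λ.d_comp, seg_d0]
  have hdX : ∀ r, r ≤ Λ.d (X r).2 := by
    intro r i
    rw [hdeg r]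
    simp only [Pi.add_apply, Pi.sub_apply, Pi.sup_apply]
    omega
  have hX : ∀ p q, p ≤ q → ∃ w : Λ.Hom (X p).1 (X q).1,
      (X q).2 = Λ.comp (X p).2 w := by
    intro p q hpq
    have hs : (p ⊔ Λ.d μ) - Λ.d μ ≤ (q ⊔ Λ.d μ) - Λ.d μ := by
      intro i
      simp only [Pi.sub_apply, Pi.sup_apply]
      have h9 : p i ≤ q i := hpq i
      omega
    refine ⟨x.seg _ _ hs, ?_⟩
    show Λ.comp μ _ = _
    rw [Λ.assoc, x.seg_comp 0 _ _ (le0 _) hs]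
  obtain ⟨y, hy0, hyseg⟩ := exists_ofGlobal a X hdX hX
  -- main computation
  have P1 : ∀ r, MEq (y.seg 0 (Λ.d μ + r) (le0 _))
      (Λ.comp μ (x.seg 0 r (le0 _))) := by
    intro r
    have hs : ((Λ.d μ + r) ⊔ Λ.d μ) - Λ.d μ = r := by
      funext i
      simp only [Pi.add_apply, Pi.sub_apply, Pi.sup_apply]
      omega
    have hXr : MEq (X (Λ.d μ + r)).2 (Λ.comp μ (x.seg 0 r (le0 _))) :=
      MEq.comp (MEq.refl μ) (seg_congr_idx x rfl hs _ _)
    have hdr : Λ.d (X (Λ.d μ + r)).2 = Λ.d μ + r := by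
      rw [hdeg, hs]
    exact ((hyseg (Λ.d μ + r)).trans (preFac_full hdr)).trans hXr
  have hseg0 : MEq (y.seg 0 (Λ.d μ) (le0 _)) μ := by
    have h0 := P1 0
    have hid : Λ.comp μ (x.seg 0 0 (le0 _)) = μ := by
      have := x.seg_id 0
      rw [this, Λ.comp_id]
    rw [hid] at h0
    exact h0
  refine ⟨y, rfl, hy0, ?_, hseg0.2.2⟩
  apply InfPath.ext'
  intro r
  show MEq (y.seg (Λ.d μ + 0) (Λ.d μ + r) _) (x.seg 0 r _)
  have hcomp : MEq (Λ.comp (y.seg 0 (Λ.d μ) (le0 _)) (y.seg (Λ.d μ) (Λ.d μ + r) (le_addr _ _)))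
      (Λ.comp μ (x.seg 0 r (le0 _))) := by
    rw [y.seg_comp 0 (Λ.d μ) (Λ.d μ + r) (le0 _) (le_addr _ _)]
    exact P1 r
  exact (factor_unique' (by rw [seg_d0]) hcomp).2

end KGraph
namespace KGraph

variable {k : ℕ} {Λ : KGraph k}

theorem Cycline.diag {a v : Λ.Obj} (μ : Λ.Hom a v) : Λ.Cycline μ μ :=
  ⟨rfl, fun _ _ _ h1 h2 => h1.unique h2⟩

theorem Cycline.congr {a v b w a' v' b' w' : Λ.Obj} {μ : Λ.Hom a v}
    {ν : Λ.Hom b w} {μ' : Λ.Hom a' v'} {ν' : Λ.Hom b' w'}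
    (hμ : MEq μ μ') (hν : MEq ν ν') (h : Λ.Cycline μ ν) : Λ.Cycline μ' ν' := by
  obtain ⟨e1, e2, e3⟩ := hμ
  obtain ⟨e4, e5, e6⟩ := hν
  subst e1; subst e2; subst e4; subst e5
  rwa [eq_of_heq e3, eq_of_heq e6] at h

theorem cycline_ZZ_subset_iso {a b v : Λ.Obj} {μ : Λ.Hom a v} {ν : Λ.Hom b v}
    (hc : Λ.Cycline μ ν) : Λ.ZZ μ ν ⊆ Λ.isoSet := by
  rintro g ⟨u, h1, h2, _⟩
  exact hc.2 u g.1.1 g.1.2.2 h1 h2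

/-- Extending cycline pairs along a common tail. -/
theorem Cycline.extend {a b v : Λ.Obj} {α : Λ.Hom a v} {β : Λ.Hom b v}
    (hc : Λ.Cycline α β) {t X Y : Λ.InfPath}
    (hX : Λ.IsPrepend α t X) (hY : Λ.IsPrepend β t Y) (s : Fin k → ℕ) :
    Λ.Cycline (X.seg 0 (Λ.d α + s) (le0 _)) (Y.seg 0 (Λ.d β + s) (le0 _)) := by
  constructor
  · exact (hX.tail_seg s).tgt.trans ((hY.tail_seg s).tgt).symm
  · intro u Yp Zp hYp hZp
    have hXsplit : MEq (Λ.comp (X.seg 0 (Λ.d α) (le0 _)) (X.seg (Λ.d α) (Λ.d α + s) (le_addr _ _)))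
        (X.seg 0 (Λ.d α + s) (le0 _)) := MEq.ofEq (X.seg_comp _ _ _ _ _)
    have hYsplit : MEq (Λ.comp (Y.seg 0 (Λ.d β) (le0 _)) (Y.seg (Λ.d β) (Λ.d β + s) (le_addr _ _)))
        (Y.seg 0 (Λ.d β + s) (le0 _)) := MEq.ofEq (Y.seg_comp _ _ _ _ _)
    have hYp' := (hYp.congr hXsplit.symm).of_comp _ _
    have hZp' := (hZp.congr hYsplit.symm).of_comp _ _
    rw [show Λ.d (X.seg 0 (Λ.d α) (le0 _)) = Λ.d α from seg_d0 _ _ _] at hYp'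
    rw [show Λ.d (Y.seg 0 (Λ.d β) (le0 _)) = Λ.d β from seg_d0 _ _ _] at hZp'
    obtain ⟨hW1, hW2⟩ := hYp'
    obtain ⟨hW1', hW2'⟩ := hZp'
    have hα' : Λ.IsPrepend α (Λ.shift (Λ.d α) Yp) Yp := hW1.congr hX.seg0
    have hβ' : Λ.IsPrepend β (Λ.shift (Λ.d β) Zp) Zp := hW1'.congr hY.seg0
    have hgd : Λ.d (X.seg (Λ.d α) (Λ.d α + s) (le_addr _ _)) = s := by
      rw [X.seg_deg]
      funext i
      simp only [Pi.sub_apply, Pi.add_apply]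
      omega
    have hgd' : Λ.d (Y.seg (Λ.d β) (Λ.d β + s) (le_addr _ _)) = s := by
      rw [Y.seg_deg]
      funext i
      simp only [Pi.sub_apply, Pi.add_apply]
      omega
    have h0 : MEq ((Λ.shift (Λ.d α) Yp).seg 0 s (le0 _))
        ((Λ.shift (Λ.d β) Zp).seg 0 s (le0 _)) := by
      have e1 := (seg_congr_idx (Λ.shift (Λ.d α) Yp) rfl hgd (le0 _) (le0 _)).symm.trans hW2.seg0
      have e2 := (seg_congr_idx (Λ.shift (Λ.d β) Zp) rfl hgd' (le0 _) (le0 _)).symm.trans hW2'.seg0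
      exact ((e1.trans (hX.tail_seg s)).trans (hY.tail_seg s).symm).trans e2.symm
    have ht : Λ.shift s (Λ.shift (Λ.d α) Yp) = Λ.shift s (Λ.shift (Λ.d β) Zp) := by
      rw [shift_shift, shift_shift]
      have e1 : Λ.shift (Λ.d α + s) Yp = u := by
        have := hYp.2.2.1
        rwa [show Λ.d (X.seg 0 (Λ.d α + s) (le0 _)) = Λ.d α + s from seg_d0 _ _ _] at this
      have e2 : Λ.shift (Λ.d β + s) Zp = u := by
        have := hZp.2.2.1
        rwa [show Λ.d (Y.seg 0 (Λ.d β + s) (le0 _)) = Λ.d β + s from seg_d0 _ _ _] at this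
      rw [e1, e2]
    have hWW : Λ.shift (Λ.d α) Yp = Λ.shift (Λ.d β) Zp := ext_of_prefix_tail h0 ht
    rw [← hWW] at hβ'
    exact hc.2 _ Yp Zp hα' hβ'

/-- The canonical basic neighbourhoods in the path groupoid. -/
def ZZn (x y : Λ.InfPath) (P Q : Fin k → ℕ) : Set Λ.PathGroupoid :=
  {g | ∃ u : Λ.InfPath, Λ.IsPrepend (x.seg 0 P (le0 _)) u g.1.1 ∧
    Λ.IsPrepend (y.seg 0 Q (le0 _)) u g.1.2.2 ∧
    ∀ i, g.1.2.1 i = (P i : ℤ) - (Q i : ℤ)}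

theorem ZZn_spec {x y : Λ.InfPath} {P Q : Fin k → ℕ} (h : y.vert Q = x.vert P) :
    ∃ ν : Λ.Hom (y.vert 0) (x.vert P), MEq ν (y.seg 0 Q (le0 _)) ∧
      ZZn x y P Q = Λ.ZZ (x.seg 0 P (le0 _)) ν := by
  refine ⟨castHom rfl h (y.seg 0 Q (le0 _)), (castHom_MEq rfl h _), ?_⟩
  ext g
  constructor
  · rintro ⟨u, h1, h2, h3⟩
    refine ⟨u, h1, h2.congr (castHom_MEq rfl h _).symm, ?_⟩
    intro i
    rw [h3 i]
    rw [seg_d0, (castHom_MEq (Λ := Λ) rfl h (y.seg 0 Q (le0 _))).d_eq, seg_d0]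
  · rintro ⟨u, h1, h2, h3⟩
    refine ⟨u, h1, h2.congr (castHom_MEq rfl h _), ?_⟩
    intro i
    rw [h3 i]
    rw [seg_d0, (castHom_MEq (Λ := Λ) rfl h (y.seg 0 Q (le0 _))).d_eq, seg_d0]

theorem isOpen_ZZn {x y : Λ.InfPath} {P Q : Fin k → ℕ} (h : y.vert Q = x.vert P) :
    IsOpen (ZZn x y P Q) := by
  obtain ⟨ν, _, hEq⟩ := ZZn_spec h
  rw [hEq]
  exact TopologicalSpace.isOpen_generateFrom_of_mem ⟨_, _, _, _, ν, rfl⟩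

theorem mem_ZZn_self (g : Λ.PathGroupoid) {P Q : Fin k → ℕ}
    (hs : Λ.shift P g.1.1 = Λ.shift Q g.1.2.2)
    (hn : ∀ i, g.1.2.1 i = (P i : ℤ) - (Q i : ℤ)) :
    g ∈ ZZn g.1.1 g.1.2.2 P Q := by
  refine ⟨Λ.shift P g.1.1, isPrepend_seg0 _ _, ?_, hn⟩
  rw [hs]
  exact isPrepend_seg0 _ _

/-- Refining canonical neighbourhoods. -/
theorem ZZn_mono {x y : Λ.InfPath} {P Q s : Fin k → ℕ}
    (hs : Λ.shift P x = Λ.shift Q y) :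
    ZZn x y (P + s) (Q + s) ⊆ ZZn x y P Q := by
  rintro g ⟨u, h1, h2, hn⟩
  have h1' := (h1.congr (MEq.ofEq (x.seg_comp 0 P (P + s) (le0 _) (le_addr _ _))).symm).of_comp _ _
  have h2' := (h2.congr (MEq.ofEq (y.seg_comp 0 Q (Q + s) (le0 _) (le_addr _ _))).symm).of_comp _ _
  rw [show Λ.d (x.seg 0 P (le0 _)) = P from seg_d0 _ _ _] at h1'
  rw [show Λ.d (y.seg 0 Q (le0 _)) = Q from seg_d0 _ _ _] at h2'
  obtain ⟨hx0, hxu⟩ := h1'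
  obtain ⟨hy0, hyu⟩ := h2'
  have hgdx : Λ.d (x.seg P (P + s) (le_addr _ _)) = s := by
    rw [x.seg_deg]; funext i; simp only [Pi.sub_apply, Pi.add_apply]; omega
  have hgdy : Λ.d (y.seg Q (Q + s) (le_addr _ _)) = s := by
    rw [y.seg_deg]; funext i; simp only [Pi.sub_apply, Pi.add_apply]; omega
  have h0 : MEq ((Λ.shift P g.1.1).seg 0 s (le0 _)) ((Λ.shift Q g.1.2.2).seg 0 s (le0 _)) := by
    have e1 := (seg_congr_idx (Λ.shift P g.1.1) rfl hgdx (le0 _) (le0 _)).symm.trans hxu.seg0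
    have e2 := (seg_congr_idx (Λ.shift Q g.1.2.2) rfl hgdy (le0 _) (le0 _)).symm.trans hyu.seg0
    have e3 : MEq (x.seg P (P + s) (le_addr _ _)) (y.seg Q (Q + s) (le_addr _ _)) :=
      seg_MEq_of_path_eq hs 0 s (le0 _)
    exact (e1.trans e3).trans e2.symm
  have ht : Λ.shift s (Λ.shift P g.1.1) = Λ.shift s (Λ.shift Q g.1.2.2) := by
    rw [shift_shift, shift_shift]
    have e1 : Λ.shift (P + s) g.1.1 = u := by
      have := h1.2.2.1
      rwa [show Λ.d (x.seg 0 (P + s) (le0 _)) = P + s from seg_d0 _ _ _] at this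
    have e2 : Λ.shift (Q + s) g.1.2.2 = u := by
      have := h2.2.2.1
      rwa [show Λ.d (y.seg 0 (Q + s) (le0 _)) = Q + s from seg_d0 _ _ _] at this
    rw [e1, e2]
  have hWW := ext_of_prefix_tail h0 ht
  refine ⟨Λ.shift P g.1.1, hx0, ?_, ?_⟩
  · rw [hWW]; exact hy0
  · intro i
    have := hn i
    simp only [Pi.add_apply] at this
    push_cast at this ⊢
    omega

end KGraph
namespace KGraph

variable {k : ℕ} {Λ : KGraph k}

/-- Every open set contains a canonical basic neighbourhood of its points. -/
theorem exists_ZZn_subset {U : Set Λ.PathGroupoid} (hU : IsOpen U)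
    {g : Λ.PathGroupoid} (hg : g ∈ U) :
    ∃ P Q : Fin k → ℕ, Λ.shift P g.1.1 = Λ.shift Q g.1.2.2 ∧
      (∀ i, g.1.2.1 i = (P i : ℤ) - (Q i : ℤ)) ∧ ZZn g.1.1 g.1.2.2 P Q ⊆ U := by
  have hU' : TopologicalSpace.GenerateOpen
      {S | ∃ (a b v : Λ.Obj) (μ : Λ.Hom a v) (ν : Λ.Hom b v), S = Λ.ZZ μ ν} U := hU
  clear hU
  induction hU' with
  | @basic S hS =>
      obtain ⟨a, b, v, μ, ν, rfl⟩ := hS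
      obtain ⟨t, h1, h2, hn⟩ := hg
      refine ⟨Λ.d μ, Λ.d ν, ?_, hn, ?_⟩
      · rw [h1.2.2.1, h2.2.2.1]
      · rintro h ⟨u, k1, k2, kn⟩
        exact ⟨u, k1.congr h1.seg0, k2.congr h2.seg0, kn⟩
  | univ =>
      obtain ⟨p, q, hn, hsh⟩ := g.2
      exact ⟨p, q, hsh, hn, fun _ _ => trivial⟩
  | @inter U V hUo hVo ihU ihV =>
      obtain ⟨P1, Q1, hs1, hn1, hsub1⟩ := ihU hg.1
      obtain ⟨P2, Q2, hs2, hn2, hsub2⟩ := ihV hg.2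
      set s1 : Fin k → ℕ := (P1 ⊔ P2) - P1 with hs1def
      set s2 : Fin k → ℕ := (P1 ⊔ P2) - P2 with hs2def
      have e1 : P1 ⊔ P2 = P1 + s1 := by
        funext i; simp only [hs1def, Pi.sup_apply, Pi.add_apply, Pi.sub_apply]; omega
      have e2 : Q1 ⊔ Q2 = Q1 + s1 := by
        funext i
        have a1 := hn1 i; have a2 := hn2 i
        simp only [hs1def, Pi.sup_apply, Pi.add_apply, Pi.sub_apply]
        omega
      have e3 : P1 ⊔ P2 = P2 + s2 := by
        funext i; simp only [hs2def, Pi.sup_apply, Pi.add_apply, Pi.sub_apply]; omega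
      have e4 : Q1 ⊔ Q2 = Q2 + s2 := by
        funext i
        have a1 := hn1 i; have a2 := hn2 i
        simp only [hs2def, Pi.sup_apply, Pi.add_apply, Pi.sub_apply]
        omega
      refine ⟨P1 ⊔ P2, Q1 ⊔ Q2, ?_, ?_, ?_⟩
      · rw [shift_congr e1 g.1.1, shift_congr e2 g.1.2.2, ← shift_shift, ← shift_shift, hs1]
      · intro i
        have a1 := hn1 i
        have c1 := congrFun e1 i
        have c2 := congrFun e2 i
        simp only [Pi.sup_apply, Pi.add_apply] at c1 c2 ⊢
        push_cast
        omega
      · intro h hh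
        have hh1 : h ∈ ZZn g.1.1 g.1.2.2 (P1 + s1) (Q1 + s1) := by
          rw [← e1, ← e2]; exact hh
        have hh2 : h ∈ ZZn g.1.1 g.1.2.2 (P2 + s2) (Q2 + s2) := by
          rw [← e3, ← e4]; exact hh
        exact ⟨hsub1 (ZZn_mono hs1 hh1), hsub2 (ZZn_mono hs2 hh2)⟩
  | sUnion S hS ih =>
      obtain ⟨T, hT, hgT⟩ := hg
      obtain ⟨P, Q, h1, h2, h3⟩ := ih T hT hgT
      exact ⟨P, Q, h1, h2, h3.trans (Set.subset_sUnion_of_mem hT)⟩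

/-- The union of all `Z(μ,ν)` over cycline pairs `(μ,ν)`. -/
def IsoU (Λ : KGraph k) : Set Λ.PathGroupoid :=
  {g | ∃ (a b v : Λ.Obj) (μ : Λ.Hom a v) (ν : Λ.Hom b v),
    Λ.Cycline μ ν ∧ g ∈ Λ.ZZ μ ν}

theorem IsoU_subset_iso : IsoU Λ ⊆ Λ.isoSet := by
  rintro g ⟨a, b, v, μ, ν, hc, hg⟩
  exact cycline_ZZ_subset_iso hc hg

theorem interior_isoSet_eq : interior Λ.isoSet = IsoU Λ := by
  apply Set.Subset.antisymm
  · intro g hg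
    obtain ⟨P, Q, hs, hn, hsub⟩ := exists_ZZn_subset isOpen_interior hg
    have hsub' : ZZn g.1.1 g.1.2.2 P Q ⊆ Λ.isoSet := hsub.trans interior_subset
    have hvert : g.1.2.2.vert Q = g.1.1.vert P :=
      (congrArg (fun z : Λ.InfPath => z.vert 0) hs).symm
    obtain ⟨ν, hν, hEq⟩ := ZZn_spec hvert
    refine ⟨_, _, _, g.1.1.seg 0 P (le0 _), ν, ?_, ?_⟩
    · refine ⟨rfl, ?_⟩
      intro u Y Z hY hZ
      have hPY : Λ.shift P Y = u := by
        have := hY.2.2.1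
        rwa [show Λ.d (g.1.1.seg 0 P (le0 _)) = P from seg_d0 _ _ _] at this
      have hQZ : Λ.shift Q Z = u := by
        have := hZ.2.2.1
        rwa [show Λ.d ν = Q from hν.d_eq.trans (seg_d0 _ _ _)] at this
      have hE : (⟨(Y, fun i => (P i : ℤ) - (Q i : ℤ), Z), P, Q, fun _ => rfl,
          hPY.trans hQZ.symm⟩ : Λ.PathGroupoid) ∈ ZZn g.1.1 g.1.2.2 P Q :=
        ⟨u, hY, hZ.congr hν, fun _ => rfl⟩
      exact hsub' hE
    · rw [← hEq]
      exact mem_ZZn_self g hs hn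
  · rintro g ⟨a, b, v, μ, ν, hc, hg⟩
    exact mem_interior.mpr ⟨Λ.ZZ μ ν, cycline_ZZ_subset_iso hc,
      TopologicalSpace.isOpen_generateFrom_of_mem ⟨a, b, v, μ, ν, rfl⟩, hg⟩

end KGraph
namespace KGraph

variable {k : ℕ} {Λ : KGraph k}

theorem le_addl (p s : Fin k → ℕ) : p ≤ s + p := fun i => Nat.le_add_left _ _

/-- Direction →: if `Iso(G_Λ)°` is closed then all `Λ^∞_{p,q}` are empty. -/
theorem dir_mp (hns : Λ.NoSources) (hclosed : IsClosed (interior Λ.isoSet))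
    (p q : Fin k → ℕ) (hpq : p ≠ q) : Λ.LambdaPQ p q = ∅ := by
  rw [interior_isoSet_eq] at hclosed
  rw [Set.eq_empty_iff_forall_notMem]
  intro x hx
  obtain ⟨hxs, hx2⟩ := hx
  let g : Λ.PathGroupoid :=
    ⟨(x, fun i => (p i : ℤ) - (q i : ℤ), x), p, q, fun _ => rfl, hxs⟩
  -- g is not in Iso°
  have hnotin : g ∉ IsoU Λ := by
    rintro ⟨a, b, v, μ, ν, hcyc, t, h1, h2, hn⟩
    have h1' : Λ.IsPrepend μ t x := h1
    have h2' : Λ.IsPrepend ν t x := h2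
    have hn' : ∀ i, (p i : ℤ) - (q i : ℤ) = (Λ.d μ i : ℤ) - (Λ.d ν i : ℤ) := hn
    set s : Fin k → ℕ := (p + (Λ.d μ ⊔ Λ.d ν)) - Λ.d μ with hsdef
    have e1 : Λ.d μ + s = p + (Λ.d μ ⊔ Λ.d ν) := by
      funext i
      simp only [hsdef, Pi.add_apply, Pi.sub_apply, Pi.sup_apply]
      omega
    have e2 : Λ.d ν + s = q + (Λ.d μ ⊔ Λ.d ν) := by
      funext i
      have := hn' i
      simp only [hsdef, Pi.add_apply, Pi.sub_apply, Pi.sup_apply]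
      omega
    have hext := hcyc.extend h1' h2' s
    exact (hx2 (Λ.d μ ⊔ Λ.d ν)).1
      (Cycline.congr (seg_congr_idx x rfl e1 (le0 _) (le0 _))
        (seg_congr_idx x rfl e2 (le0 _) (le0 _)) hext)
  -- g is in the closure of Iso°
  have hclos : g ∈ closure (IsoU Λ) := by
    rw [mem_closure_iff]
    intro U hUo hgU
    obtain ⟨P, Q, hs', hn', hsub⟩ := exists_ZZn_subset hUo hgU
    have hs'' : Λ.shift P x = Λ.shift Q x := hs'
    have hn'' : ∀ i, (p i : ℤ) - (q i : ℤ) = (P i : ℤ) - (Q i : ℤ) := hn'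
    set m : Fin k → ℕ := P ⊔ Q with hmdef
    set s : Fin k → ℕ := (p + m) - P with hsdef
    have e1 : p + m = P + s := by
      funext i
      simp only [hsdef, hmdef, Pi.add_apply, Pi.sub_apply, Pi.sup_apply]
      omega
    have e2 : q + m = Q + s := by
      funext i
      have := hn'' i
      simp only [hsdef, hmdef, Pi.add_apply, Pi.sub_apply, Pi.sup_apply]
      omega
    have hsub2 : ZZn x x (p + m) (q + m) ⊆ U := by
      intro h hh
      apply hsub
      apply ZZn_mono hs''
      rw [← e1, ← e2]
      exact hh
    -- data from Λ^∞_{p,q}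
    obtain ⟨c, μt, νt, hheq, hcycPQ⟩ := (hx2 m).2
    have hvpq : x.vert (p + m) = x.vert (q + m) :=
      congrArg (fun z : Λ.InfPath => z.vert m) hxs
    have hμν : MEq μt νt := ⟨hvpq, rfl, hheq⟩
    have hdμν : Λ.d μt = Λ.d νt := hμν.d_eq
    obtain ⟨u0, hu0⟩ := exists_path hns c
    obtain ⟨Y, hY⟩ := exists_prepend u0
      (castHom rfl hu0.symm (Λ.comp (x.seg 0 (p + m) (le0 _)) μt))
    obtain ⟨Z, hZ⟩ := exists_prepend u0
      (castHom rfl hu0.symm (Λ.comp (x.seg 0 (q + m) (le0 _)) νt))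
    have hY' : Λ.IsPrepend (Λ.comp (x.seg 0 (p + m) (le0 _)) μt) u0 Y :=
      hY.congr (castHom_MEq _ _ _)
    have hZ' : Λ.IsPrepend (Λ.comp (x.seg 0 (q + m) (le0 _)) νt) u0 Z :=
      hZ.congr (castHom_MEq _ _ _)
    have hdY : Λ.d (Λ.comp (x.seg 0 (p + m) (le0 _)) μt) = (p + m) + Λ.d μt := by
      rw [Λ.d_comp, seg_d0]
    have hdZ : Λ.d (Λ.comp (x.seg 0 (q + m) (le0 _)) νt) = (q + m) + Λ.d νt := by
      rw [Λ.d_comp, seg_d0]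
    have hshY : Λ.shift ((p + m) + Λ.d μt) Y = u0 := by
      have := hY'.2.2.1; rwa [hdY] at this
    have hshZ : Λ.shift ((q + m) + Λ.d νt) Z = u0 := by
      have := hZ'.2.2.1; rwa [hdZ] at this
    have hnprop : ∀ i, ((p i : ℤ) - (q i : ℤ))
        = ((((p + m) + Λ.d μt) i : ℤ)) - ((((q + m) + Λ.d νt) i : ℤ)) := by
      intro i
      have := congrFun hdμν i
      simp only [Pi.add_apply]
      push_cast
      omega
    let h : Λ.PathGroupoid :=
      ⟨(Y, fun i => (p i : ℤ) - (q i : ℤ), Z), (p + m) + Λ.d μt, (q + m) + Λ.d νt,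
        hnprop, hshY.trans hshZ.symm⟩
    -- h lies in ZZn x x (p+m) (q+m)
    have h4 := hY'.of_comp _ _
    have h5 := hZ'.of_comp _ _
    rw [show Λ.d (x.seg 0 (p + m) (le0 _)) = p + m from seg_d0 _ _ _] at h4
    rw [show Λ.d (x.seg 0 (q + m) (le0 _)) = q + m from seg_d0 _ _ _] at h5
    obtain ⟨h4a, h4b⟩ := h4
    obtain ⟨h5a, h5b⟩ := h5
    have h0 : MEq ((Λ.shift (p + m) Y).seg 0 (Λ.d μt) (le0 _))
        ((Λ.shift (q + m) Z).seg 0 (Λ.d μt) (le0 _)) := by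
      have e3 : MEq ((Λ.shift (q + m) Z).seg 0 (Λ.d μt) (le0 _))
          ((Λ.shift (q + m) Z).seg 0 (Λ.d νt) (le0 _)) :=
        seg_congr_idx _ rfl hdμν (le0 _) (le0 _)
      exact (h4b.seg0.trans hμν).trans (e3.trans h5b.seg0).symm
    have ht : Λ.shift (Λ.d μt) (Λ.shift (p + m) Y)
        = Λ.shift (Λ.d μt) (Λ.shift (q + m) Z) := by
      rw [shift_shift, shift_shift, hshY,
        show (q + m) + Λ.d μt = (q + m) + Λ.d νt from by rw [hdμν], hshZ]
    have hcom := ext_of_prefix_tail h0 ht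
    have hmem : h ∈ ZZn x x (p + m) (q + m) := by
      refine ⟨Λ.shift (p + m) Y, h4a, ?_, ?_⟩
      · rw [hcom]; exact h5a
      · intro i
        show (p i : ℤ) - (q i : ℤ) = _
        simp only [Pi.add_apply]
        push_cast
        omega
    have hiso : h ∈ IsoU Λ :=
      ⟨_, _, c, Λ.comp (x.seg 0 (p + m) (le0 _)) μt,
        Λ.comp (x.seg 0 (q + m) (le0 _)) νt, hcycPQ, u0, hY', hZ',
        by intro i; rw [hdY, hdZ]; exact hnprop i⟩
    exact ⟨h, hsub2 hmem, hiso⟩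
  exact hnotin (hclosed.closure_subset hclos)

end KGraph
namespace KGraph

variable {k : ℕ} {Λ : KGraph k}

/-- Direction ←: if all `Λ^∞_{p,q}` are empty then `Iso(G_Λ)°` is closed. -/
theorem dir_mpr (hLpq : ∀ p q : Fin k → ℕ, p ≠ q → Λ.LambdaPQ p q = ∅) :
    IsClosed (interior Λ.isoSet) := by
  rw [interior_isoSet_eq]
  apply isClosed_of_closure_subset
  intro g hg
  obtain ⟨p, q, hn, hs⟩ := g.2
  -- Step 1: the two paths of g coincide
  have hxy : g.1.1 = g.1.2.2 := by
    apply InfPath.ext'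
    intro R
    have hsh : Λ.shift (p + R) g.1.1 = Λ.shift (q + R) g.1.2.2 := by
      rw [← shift_shift, ← shift_shift, hs]
    have hvert : g.1.2.2.vert (q + R) = g.1.1.vert (p + R) :=
      (congrArg (fun z : Λ.InfPath => z.vert 0) hsh).symm
    have hmem : g ∈ ZZn g.1.1 g.1.2.2 (p + R) (q + R) :=
      mem_ZZn_self g hsh (by
        intro i
        have := hn i
        simp only [Pi.add_apply]
        push_cast
        omega)
    obtain ⟨h, hh1, hh2⟩ := mem_closure_iff.mp hg _ (isOpen_ZZn hvert) hmem
    have hhss : h.1.1 = h.1.2.2 := IsoU_subset_iso hh2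
    obtain ⟨u, k1, k2, _⟩ := hh1
    rw [← hhss] at k2
    have c1 : MEq (g.1.1.seg 0 (p + R) (le0 _)) (h.1.1.seg 0 (p + R) (le0 _)) :=
      ((seg_congr_idx h.1.1 rfl (seg_d0 g.1.1 (p + R) (le0 _)) (le0 _)
        (le0 _)).symm.trans k1.seg0).symm
    have c2 : MEq (g.1.2.2.seg 0 (q + R) (le0 _)) (h.1.1.seg 0 (q + R) (le0 _)) :=
      ((seg_congr_idx h.1.1 rfl (seg_d0 g.1.2.2 (q + R) (le0 _)) (le0 _)
        (le0 _)).symm.trans k2.seg0).symm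
    have d1 := (prefix_MEq (le_addl R p) c1).1
    have d2 := (prefix_MEq (le_addl R q) c2).1
    exact d1.trans d2.symm
  -- Step 2
  by_cases hpq0 : p = q
  · subst hpq0
    have hsp : Λ.shift p g.1.1 = Λ.shift p g.1.2.2 := hs
    have hvert : g.1.2.2.vert p = g.1.1.vert p :=
      (congrArg (fun z : Λ.InfPath => z.vert 0) hsp).symm
    obtain ⟨ν, hν, hEq⟩ := ZZn_spec hvert
    refine ⟨_, _, _, g.1.1.seg 0 p (le0 _), ν, ?_, ?_⟩
    · refine Cycline.congr (MEq.refl _) ?_ (Cycline.diag (g.1.1.seg 0 p (le0 _)))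
      exact ((seg_MEq_of_path_eq hxy 0 p (le0 _)).trans hν.symm).symm.symm
    · rw [← hEq]
      exact mem_ZZn_self g hsp (fun i => hn i)
  · by_cases hC : ∃ m : Fin k → ℕ,
      Λ.Cycline (g.1.1.seg 0 (p + m) (le0 _)) (g.1.1.seg 0 (q + m) (le0 _))
    · obtain ⟨m, hm⟩ := hC
      have hsh : Λ.shift (p + m) g.1.1 = Λ.shift (q + m) g.1.2.2 := by
        rw [← shift_shift, ← shift_shift, hs]
      have hvert : g.1.2.2.vert (q + m) = g.1.1.vert (p + m) :=
        (congrArg (fun z : Λ.InfPath => z.vert 0) hsh).symm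
      obtain ⟨ν, hν, hEq⟩ := ZZn_spec hvert
      refine ⟨_, _, _, g.1.1.seg 0 (p + m) (le0 _), ν, ?_, ?_⟩
      · refine Cycline.congr (MEq.refl _) ?_ hm
        exact (seg_MEq_of_path_eq hxy 0 (q + m) (le0 _)).trans hν.symm
      · rw [← hEq]
        exact mem_ZZn_self g hsh (by
          intro i
          have := hn i
          simp only [Pi.add_apply]
          push_cast
          omega)
    · exfalso
      push_neg at hC
      apply Set.eq_empty_iff_forall_notMem.mp (hLpq p q hpq0) g.1.1
      have hsx : Λ.shift p g.1.1 = Λ.shift q g.1.1 := by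
        rw [hs, ← hxy]
      refine ⟨hsx, fun m => ⟨hC m, ?_⟩⟩
      -- approximate by cycline basic sets
      have hsh : Λ.shift (p + m) g.1.1 = Λ.shift (q + m) g.1.2.2 := by
        rw [← shift_shift, ← shift_shift, hs]
      have hvert : g.1.2.2.vert (q + m) = g.1.1.vert (p + m) :=
        (congrArg (fun z : Λ.InfPath => z.vert 0) hsh).symm
      have hmem : g ∈ ZZn g.1.1 g.1.2.2 (p + m) (q + m) :=
        mem_ZZn_self g hsh (by
          intro i
          have := hn i
          simp only [Pi.add_apply]
          push_cast
          omega)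
      obtain ⟨h, hh1, hh2⟩ := mem_closure_iff.mp hg _ (isOpen_ZZn hvert) hmem
      obtain ⟨u, k1, k2, kn⟩ := hh1
      obtain ⟨a, b, v, α, β, hcyc, t, l1, l2, ln⟩ := hh2
      -- convert k2 to a statement about g.1.1
      have k2' : Λ.IsPrepend (g.1.1.seg 0 (q + m) (le0 _)) u h.1.2.2 :=
        k2.congr (seg_MEq_of_path_eq hxy 0 (q + m) (le0 _)).symm
      set s0 : Fin k → ℕ := ((p + m) ⊔ Λ.d α) - Λ.d α with hs0def
      set w0 : Fin k → ℕ := ((p + m) ⊔ Λ.d α) - (p + m) with hw0def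
      have e3 : Λ.d α + s0 = (p + m) + w0 := by
        funext i
        simp only [hs0def, hw0def, Pi.add_apply, Pi.sub_apply, Pi.sup_apply]
        omega
      have e4 : Λ.d β + s0 = (q + m) + w0 := by
        funext i
        have a1 := kn i
        have a2 := ln i
        simp only [hs0def, hw0def, Pi.add_apply, Pi.sub_apply, Pi.sup_apply] at *
        omega
      -- prefix/tail data on the p side
      have segPM : MEq (h.1.1.seg 0 (p + m) (le0 _)) (g.1.1.seg 0 (p + m) (le0 _)) :=
        (seg_congr_idx h.1.1 rfl (seg_d0 g.1.1 (p + m) (le0 _)) (le0 _)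
          (le0 _)).symm.trans k1.seg0
      have tailPM : MEq (h.1.1.seg (p + m) ((p + m) + w0) (le_addr _ _)) (u.seg 0 w0 (le0 _)) := by
        have := k1.tail_seg w0
        refine (MEq.trans ?_ this)
        exact seg_congr_idx h.1.1 (seg_d0 g.1.1 (p + m) (le0 _)).symm
          (by rw [seg_d0]) (le_addr _ _) (le_addr _ _)
      have segQM : MEq (h.1.2.2.seg 0 (q + m) (le0 _)) (g.1.1.seg 0 (q + m) (le0 _)) :=
        (seg_congr_idx h.1.2.2 rfl (seg_d0 g.1.1 (q + m) (le0 _)) (le0 _)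
          (le0 _)).symm.trans k2'.seg0
      have tailQM : MEq (h.1.2.2.seg (q + m) ((q + m) + w0) (le_addr _ _)) (u.seg 0 w0 (le0 _)) := by
        have := k2'.tail_seg w0
        refine (MEq.trans ?_ this)
        exact seg_congr_idx h.1.2.2 (seg_d0 g.1.1 (q + m) (le0 _)).symm
          (by rw [seg_d0]) (le_addr _ _) (le_addr _ _)
      -- the extension morphisms
      refine ⟨u.vert w0, castHom segPM.tgt tailPM.tgt
        (h.1.1.seg (p + m) ((p + m) + w0) (le_addr _ _)),
        castHom segQM.tgt tailQM.tgt
        (h.1.2.2.seg (q + m) ((q + m) + w0) (le_addr _ _)), ?_, ?_⟩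
      · -- HEq of the two extension morphisms
        have m1 := (castHom_MEq segPM.tgt tailPM.tgt
          (h.1.1.seg (p + m) ((p + m) + w0) (le_addr _ _))).trans tailPM
        have m2 := (castHom_MEq segQM.tgt tailQM.tgt
          (h.1.2.2.seg (q + m) ((q + m) + w0) (le_addr _ _))).trans tailQM
        exact (m1.trans m2.symm).2.2
      · -- the cycline property
        have hext := hcyc.extend l1 l2 s0
        refine Cycline.congr ?_ ?_ hext
        · refine (MEq.trans (seg_congr_idx h.1.1 rfl e3 (le0 _) (le0 _)) ?_)
          refine (MEq.ofEq (h.1.1.seg_comp 0 (p + m) ((p + m) + w0) (le0 _)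
            (le_addr _ _))).symm.trans ?_
          exact segPM.comp (castHom_MEq segPM.tgt tailPM.tgt _).symm
        · refine (MEq.trans (seg_congr_idx h.1.2.2 rfl e4 (le0 _) (le0 _)) ?_)
          refine (MEq.ofEq (h.1.2.2.seg_comp 0 (q + m) ((q + m) + w0) (le0 _)
            (le_addr _ _))).symm.trans ?_
          exact segQM.comp (castHom_MEq segQM.tgt tailQM.tgt _).symm

end KGraph

/-- Theorem 4.5: `Iso(G_Λ)°` is closed iff `Λ^∞_{p,q} = ∅` for all `p ≠ q` in `ℕ^k`. -/
theorem stmt12 {k : ℕ} (hk : 1 ≤ k) (Λ : KGraph k)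
    [Countable Λ.Obj] [Countable (Σ a b : Λ.Obj, Λ.Hom a b)]
    (hrow : Λ.RowFinite) (hns : Λ.NoSources) :
    IsClosed (interior Λ.isoSet) ↔
      ∀ p q : Fin k → ℕ, p ≠ q → Λ.LambdaPQ p q = ∅ := by
  constructor
  · intro hclosed p q hpq
    exact KGraph.dir_mp hns hclosed p q hpq
  · intro h
    exact KGraph.dir_mpr h
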